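/- arXiv:2302.12940 — 6 statements merged into one kernel-verified Lean document; each statement's English description precedes it below -/
import Mathlib

section
/- For every integer p ≥ 2 and every real number z with 0 ≤ z ≤ 1/2, the degree-p Taylor polynomial of the exponential at 0 satisfies T_p(−z) ≤ 1 − z/2. -/
/-- `T p x` is the degree-`p` Taylor polynomial of the exponential function at `0`. -/
noncomputable def taylorExp (p : ℕ) (x : ℝ) : ℝ :=
  ∑ j ∈ Finset.range (p + 1), x ^ j / (Nat.factorial j : ℝ)

lemma taylorExp_succ (p : ℕ) (x : ℝ) :
    taylorExp (p + 1) x = taylorExp p x + x ^ (p + 1) / (Nat.factorial (p + 1) : ℝ) := by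
  simp [taylorExp, Finset.sum_range_succ]

lemma pair_nonpos (z : ℝ) (hz0 : 0 ≤ z) (hz1 : z ≤ 1) (j : ℕ) (hj : Odd j) :
    (-z) ^ j / (Nat.factorial j : ℝ) + (-z) ^ (j + 1) / (Nat.factorial (j + 1) : ℝ) ≤ 0 := by
  rw [hj.neg_pow, (Nat.even_add_one.mpr (Nat.not_even_iff_odd.mpr hj)).neg_pow]
  have h1 : (0:ℝ) < Nat.factorial j := by positivity
  have h2 : (0:ℝ) < Nat.factorial (j + 1) := by positivity
  have hle : (Nat.factorial j : ℝ) ≤ Nat.factorial (j + 1) := by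
    exact_mod_cast Nat.factorial_le (Nat.le_succ j)
  have hz : z ^ (j + 1) ≤ z ^ j := pow_le_pow_of_le_one hz0 hz1 (Nat.le_succ j)
  have hzj : 0 ≤ z ^ j := pow_nonneg hz0 j
  have : z ^ (j + 1) / (Nat.factorial (j + 1) : ℝ) ≤ z ^ j / (Nat.factorial j : ℝ) := by
    gcongr
  rw [neg_div]
  linarith

lemma even_bound (z : ℝ) (hz0 : 0 ≤ z) (hz1 : z ≤ 1) (m : ℕ) :
    taylorExp (2 * m + 2) (-z) ≤ taylorExp 2 (-z) := by
  induction m with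
  | zero => norm_num
  | succ n ih =>
    have h : 2 * (n + 1) + 2 = (2 * n + 2 + 1) + 1 := by ring
    rw [h, taylorExp_succ, taylorExp_succ]
    have := pair_nonpos z hz0 hz1 (2 * n + 2 + 1) ⟨n + 1, by ring⟩
    linarith

/-- For every integer `p ≥ 2` and real `z` with `0 ≤ z ≤ 1/2`,
`T_p (−z) ≤ 1 − z/2`. -/
theorem taylor_upper_bound (p : ℕ) (hp : 2 ≤ p) (z : ℝ) (hz0 : 0 ≤ z) (hz1 : z ≤ 1 / 2) :
    taylorExp p (-z) ≤ 1 - z / 2 := by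
  have hz1' : z ≤ 1 := by linarith
  have h2 : taylorExp 2 (-z) ≤ 1 - z / 2 := by
    simp only [taylorExp, Finset.sum_range_succ, Finset.sum_range_zero]
    norm_num
    nlinarith
  have key : taylorExp p (-z) ≤ taylorExp 2 (-z) := by
    rcases Nat.even_or_odd p with he | ho
    · obtain ⟨k, hk⟩ := he
      obtain ⟨m, hm⟩ : ∃ m, p = 2 * m + 2 := ⟨k - 1, by omega⟩
      rw [hm]; exact even_bound z hz0 hz1' m
    · obtain ⟨k, hk⟩ := ho
      obtain ⟨m, hm⟩ : ∃ m, p = (2 * m + 2) + 1 := ⟨k - 1, by omega⟩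
      rw [hm, taylorExp_succ]
      have hodd : Odd (2 * m + 2 + 1) := ⟨m + 1, by ring⟩
      have : (-z) ^ (2 * m + 2 + 1) / (Nat.factorial (2 * m + 2 + 1) : ℝ) ≤ 0 := by
        rw [hodd.neg_pow]
        have : (0:ℝ) ≤ z ^ (2 * m + 2 + 1) := pow_nonneg hz0 _
        have hf : (0:ℝ) < Nat.factorial (2 * m + 2 + 1) := by positivity
        exact div_nonpos_of_nonpos_of_nonneg (by linarith) (le_of_lt hf)
      have := even_bound z hz0 hz1' m
      linarith
  linarith
end

section
/- For every integer p ≥ 1 and every real number z with 0 ≤ z ≤ 1/2, the degree-p Taylor polynomial of the exponential at 0 satisfies T_p(−z) ≥ exp(−1/2) − 1/(2^p · (p+1)!), and consequently T_p(−z) ≥ 1/4. -/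
/-- For every integer `p ≥ 1` and real `z` with `0 ≤ z ≤ 1/2`,
`T_p (−z) ≥ exp(−1/2) − 1/(2^p · (p+1)!)`, and consequently `T_p (−z) ≥ 1/4`. -/
theorem taylor_lower_bound (p : ℕ) (hp : 1 ≤ p) (z : ℝ) (hz0 : 0 ≤ z) (hz1 : z ≤ 1 / 2) :
    Real.exp (-(1 / 2)) - 1 / (2 ^ p * (Nat.factorial (p + 1) : ℝ)) ≤ taylorExp p (-z) ∧
    (1 : ℝ) / 4 ≤ taylorExp p (-z) := by
  have habs : |(-z)| = z := by rw [abs_neg, abs_of_nonneg hz0]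
  have hx : |(-z)| ≤ 1 := by rw [habs]; linarith
  have hbound := Real.exp_bound hx (n := p + 1) (Nat.succ_pos p)
  rw [habs] at hbound
  have hT : taylorExp p (-z) = ∑ m ∈ Finset.range (p + 1), (-z) ^ m / m.factorial := rfl
  push_cast at hbound
  have hsub := abs_le.1 hbound
  have hF : (0 : ℝ) < ((p + 1).factorial : ℝ) := by positivity
  have hQ : (2 : ℝ) ≤ (p : ℝ) + 1 := by
    have : (1 : ℝ) ≤ (p : ℝ) := by exact_mod_cast hp
    linarith
  -- bound on the remainder term
  have hzp : z ^ (p + 1) ≤ (1 / 2 : ℝ) ^ (p + 1) :=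
    pow_le_pow_left₀ hz0 hz1 _
  have hkey : z ^ (p + 1) * (((p : ℝ) + 1 + 1) / (((p + 1).factorial : ℝ) * ((p : ℝ) + 1)))
      ≤ 1 / (2 ^ p * ((p + 1).factorial : ℝ)) := by
    have h1 : (0 : ℝ) ≤ (((p : ℝ) + 1 + 1) / (((p + 1).factorial : ℝ) * ((p : ℝ) + 1))) := by
      positivity
    calc z ^ (p + 1) * (((p : ℝ) + 1 + 1) / (((p + 1).factorial : ℝ) * ((p : ℝ) + 1)))
        ≤ (1 / 2 : ℝ) ^ (p + 1) * (((p : ℝ) + 1 + 1) / (((p + 1).factorial : ℝ) * ((p : ℝ) + 1))) :=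
          mul_le_mul_of_nonneg_right hzp h1
      _ ≤ 1 / (2 ^ p * ((p + 1).factorial : ℝ)) := by
          have h2p : (0 : ℝ) < 2 ^ p := by positivity
          have expand : (1 / 2 : ℝ) ^ (p + 1) *
              (((p : ℝ) + 1 + 1) / (((p + 1).factorial : ℝ) * ((p : ℝ) + 1))) =
              ((p : ℝ) + 1 + 1) / (2 ^ (p + 1) * ((p + 1).factorial : ℝ) * ((p : ℝ) + 1)) := by
            rw [one_div, inv_pow]
            field_simp
          rw [expand, div_le_div_iff₀ (by positivity) (by positivity), pow_succ]
          nlinarith [mul_pos h2p hF, hF, h2p]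
  have hmono : Real.exp (-(1 / 2)) ≤ Real.exp (-z) := Real.exp_le_exp.2 (by linarith)
  have hmain : Real.exp (-(1 / 2)) - 1 / (2 ^ p * ((p + 1).factorial : ℝ)) ≤ taylorExp p (-z) := by
    rw [hT]
    have := hsub.2
    linarith [hsub.2, hkey, hmono]
  refine ⟨hmain, ?_⟩
  -- exp(-1/2) ≥ 1/2 and 1/(2^p (p+1)!) ≤ 1/4
  have hexp_half : (1 / 2 : ℝ) ≤ Real.exp (-(1 / 2)) := by
    rw [Real.exp_neg, le_inv_comm₀ (by norm_num) (Real.exp_pos _)]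
    have h := Real.exp_one_lt_d9
    have : Real.exp (1 / 2) ^ 2 = Real.exp 1 := by
      rw [← Real.exp_nat_mul]; norm_num
    nlinarith [Real.exp_pos (1 / 2 : ℝ)]
  have hsmall : 1 / (2 ^ p * ((p + 1).factorial : ℝ)) ≤ 1 / 4 := by
    have h1 : (2 : ℝ) ≤ 2 ^ p := by
      calc (2:ℝ) = 2 ^ 1 := by norm_num
        _ ≤ 2 ^ p := pow_le_pow_right₀ (by norm_num) hp
    have h2 : (2 : ℝ) ≤ ((p + 1).factorial : ℝ) := by
      have h := Nat.self_le_factorial (p + 1)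
      have : 2 ≤ (p + 1).factorial := by omega
      exact_mod_cast this
    have h4 : (4 : ℝ) ≤ 2 ^ p * ((p + 1).factorial : ℝ) := by nlinarith
    apply one_div_le_one_div_of_le (by norm_num) h4
  linarith
end

section
/- Let ε be a real number with 0 < ε ≤ 1 and b ≥ 1 an integer. For every integer i with 1 ≤ i ≤ h and every real x with (ε/b)·v ≤ x ≤ v, the polynomial g_i satisfies 1/4 ≤ g_i(x) ≤ 1 − ε/(6·b·v^{q−2}). -/
/-- The round reward polynomial `g_i(x) = T_p(−x/(v^{q−1}·(3 − i/h)))`. -/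
noncomputable def roundPoly (v h p q : ℕ) (i : ℕ) (x : ℝ) : ℝ :=
  taylorExp p (-(x / ((v : ℝ) ^ (q - 1) * (3 - (i : ℝ) / (h : ℝ)))))

lemma taylor_err (p : ℕ) (hp : 2 ≤ p) (y : ℝ) (hy0 : 0 ≤ y) (hy : y ≤ 1/2) :
    |taylorExp p (-y) - Real.exp (-y)| ≤ y^3 / 3 := by
  have hx : |(-y)| ≤ 1 := by rw [abs_neg, abs_of_nonneg hy0]; linarith
  have h := Real.exp_bound hx (n := p+1) (by omega)
  rw [abs_sub_comm] at h
  have h1 : |(-y)| ^ (p+1) ≤ y ^ 3 := by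
    rw [abs_neg, abs_of_nonneg hy0]
    exact pow_le_pow_of_le_one hy0 (by linarith) (by omega)
  have h2 : (((p+1).succ : ℕ) : ℝ) / (((p+1).factorial : ℝ) * ((p+1 : ℕ) : ℝ)) ≤ 1/3 := by
    rw [div_le_div_iff₀ (by positivity) (by norm_num)]
    have hf : (6 : ℕ) ≤ (p+1).factorial := by
      calc (6:ℕ) = Nat.factorial 3 := rfl
      _ ≤ (p+1).factorial := Nat.factorial_le (by omega)
    have hf' : (6:ℝ) ≤ ((p+1).factorial : ℝ) := by exact_mod_cast hf
    have hp1 : (3:ℝ) ≤ ((p:ℝ)+1) := by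
      have : (3:ℕ) ≤ p+1 := by omega
      exact_mod_cast this
    push_cast
    nlinarith
  have h3 := mul_le_mul h1 h2 (by positivity) (by positivity)
  exact (h.trans h3).trans (le_of_eq (by ring : y ^ 3 * (1 / 3) = y ^ 3 / 3))

lemma exp_quad (y : ℝ) (hy0 : 0 ≤ y) (hy : y ≤ 1/2) :
    |Real.exp (-y) - (1 - y + y^2/2)| ≤ 2 * y^3 / 9 := by
  have hx : |(-y)| ≤ 1 := by rw [abs_neg, abs_of_nonneg hy0]; linarith
  have h := Real.exp_bound hx (n := 3) (by norm_num)
  have hsum : ∑ m ∈ Finset.range 3, (-y) ^ m / (Nat.factorial m : ℝ) = 1 - y + y^2/2 := by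
    simp [Finset.sum_range_succ, Nat.factorial]
    ring
  rw [hsum] at h
  have h2 : |(-y)| ^ 3 = y ^ 3 := by rw [abs_neg, abs_of_nonneg hy0]
  rw [h2] at h
  refine h.trans (le_of_eq ?_)
  norm_num [Nat.factorial]
  ring

lemma taylor_close (p : ℕ) (hp : 2 ≤ p) (y : ℝ) (hy0 : 0 ≤ y) (hy : y ≤ 1/2) :
    |taylorExp p (-y) - (1 - y + y^2/2)| ≤ 5 * y^3 / 9 := by
  have h1 := taylor_err p hp y hy0 hy
  have h2 := exp_quad y hy0 hy
  have := abs_sub_abs_le_abs_sub (taylorExp p (-y) - Real.exp (-y)) 0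
  calc |taylorExp p (-y) - (1 - y + y^2/2)|
      ≤ |taylorExp p (-y) - Real.exp (-y)| + |Real.exp (-y) - (1 - y + y^2/2)| :=
        abs_sub_le _ _ _
    _ ≤ y^3/3 + 2*y^3/9 := add_le_add h1 h2
    _ = 5 * y^3 / 9 := by ring

lemma taylor_range (p : ℕ) (hp : 2 ≤ p) (y : ℝ) (hy0 : 0 ≤ y) (hyub : y ≤ 1/2) :
    1/4 ≤ taylorExp p (-y) ∧ taylorExp p (-y) ≤ 1 - (11/18) * y := by
  have hclose := taylor_close p hp y hy0 hyub
  rw [abs_le] at hclose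
  obtain ⟨hlo, hhi⟩ := hclose
  have h2 : y^2 ≤ y/4 + y/4 := by nlinarith [mul_le_mul_of_nonneg_left hyub hy0]
  have h3 : y^3 ≤ y/4 := by nlinarith [mul_le_mul_of_nonneg_left h2 hy0, sq_nonneg y]
  have hsq : 0 ≤ y^2 := sq_nonneg y
  constructor
  · linarith
  · linarith

/-- Claim 3.1, range bound: for `0 < ε ≤ 1`, `b ≥ 1`, every `1 ≤ i ≤ h`
and every real `x` with `(ε/b)·v ≤ x ≤ v`, we have `1/4 ≤ g_i(x) ≤ 1 − ε/(6·b·v^{q−2})`. -/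
theorem roundPoly_range (v h p q : ℕ) (hv : 2 ≤ v) (hh : 1 ≤ h) (hp : 2 ≤ p) (hq : 2 ≤ q)
    (ε : ℝ) (hε0 : 0 < ε) (hε1 : ε ≤ 1) (b : ℕ) (hb : 1 ≤ b)
    (i : ℕ) (hi1 : 1 ≤ i) (hih : i ≤ h)
    (x : ℝ) (hx1 : ε / (b : ℝ) * (v : ℝ) ≤ x) (hx2 : x ≤ (v : ℝ)) :
    1 / 4 ≤ roundPoly v h p q i x ∧
    roundPoly v h p q i x ≤ 1 - ε / (6 * (b : ℝ) * (v : ℝ) ^ (q - 2)) := by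
  have hv' : (2:ℝ) ≤ (v:ℝ) := by exact_mod_cast hv
  have hb' : (1:ℝ) ≤ (b:ℝ) := by exact_mod_cast hb
  have hh' : (1:ℝ) ≤ (h:ℝ) := by exact_mod_cast hh
  have hw1 : (1:ℝ) ≤ (v:ℝ) ^ (q-2) := one_le_pow₀ (by linarith)
  have hih' : (i:ℝ) ≤ (h:ℝ) := by exact_mod_cast hih
  have hi0 : (0:ℝ) ≤ (i:ℝ) := by positivity
  have hd2 : 2 ≤ 3 - (i:ℝ)/(h:ℝ) := by
    have : (i:ℝ)/(h:ℝ) ≤ 1 := by rw [div_le_one (by linarith)]; exact hih'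
    linarith
  have hd3 : 3 - (i:ℝ)/(h:ℝ) ≤ 3 := by
    have : 0 ≤ (i:ℝ)/(h:ℝ) := by positivity
    linarith
  have hpow : (v:ℝ) ^ (q-1) = (v:ℝ) * (v:ℝ) ^ (q-2) := by
    have hq1 : q - 1 = (q-2) + 1 := by omega
    rw [hq1, pow_succ, mul_comm]
  set w : ℝ := (v:ℝ) ^ (q-2) with hwdef
  clear_value w
  set d : ℝ := 3 - (i:ℝ)/(h:ℝ) with hddef
  clear_value d
  have hcpos : 0 < (v:ℝ) * w * d :=
    mul_pos (mul_pos (by linarith) (by linarith)) (by linarith)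
  have hx0 : 0 < x := lt_of_lt_of_le (by positivity) hx1
  have hy0 : 0 ≤ x / ((v:ℝ) * w * d) := by positivity
  have hyub : x / ((v:ℝ) * w * d) ≤ 1/2 := by
    rw [div_le_iff₀ hcpos]
    nlinarith [mul_le_mul_of_nonneg_left hd2 (by linarith : (0:ℝ) ≤ w)]
  have hεv : ε * (v:ℝ) ≤ (b:ℝ) * x := by
    rw [div_mul_eq_mul_div, div_le_iff₀ (by linarith : (0:ℝ) < (b:ℝ))] at hx1
    linarith
  have hylb : ε / (3 * (b:ℝ) * w) ≤ x / ((v:ℝ) * w * d) := by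
    rw [div_le_div_iff₀ (by nlinarith) hcpos]
    nlinarith [mul_le_mul_of_nonneg_right hεv (by linarith : (0:ℝ) ≤ w),
      mul_nonneg (mul_nonneg (mul_nonneg hε0.le (by positivity : (0:ℝ) ≤ (v:ℝ)))
        (by linarith : (0:ℝ) ≤ 3 - d)) (by linarith : (0:ℝ) ≤ w)]
  obtain ⟨hL, hU⟩ := taylor_range p hp (x / ((v:ℝ) * w * d)) hy0 hyub
  have hrp : roundPoly v h p q i x = taylorExp p (-(x / ((v:ℝ) * w * d))) := by
    rw [roundPoly, hpow, ← hddef]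
  rw [hrp]
  refine ⟨hL, hU.trans ?_⟩
  have h6 : ε / (6 * (b:ℝ) * w) = (ε / (3 * (b:ℝ) * w)) / 2 := by ring
  have : ε / (6 * (b:ℝ) * w) ≤ (11/18) * (x / ((v:ℝ) * w * d)) := by rw [h6]; linarith
  linarith
end

section
/- Set p = 2 and q = 4, and suppose v ≥ 2 and h ≥ 2. For every integer i with 1 ≤ i ≤ h, all reals c, d with 0 ≤ c, d ≤ v, and every real x with 0 ≤ x ≤ d, one has |g_i(c+x)·g_{i+1}(d−x) − exp(−(c+x)/(v³·(3 − i/h)))·exp(−(d−x)/(v³·(3 − (i+1)/h)))| ≤ 1/v⁶. -/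
lemma taylorExp_two (y : ℝ) : taylorExp 2 y = 1 + y + y ^ 2 / 2 := by
  simp [taylorExp, Finset.sum_range_succ, Nat.factorial]

lemma exp_taylor2_err {t : ℝ} (ht0 : 0 ≤ t) (ht1 : t ≤ 1) :
    |taylorExp 2 (-t) - Real.exp (-t)| ≤ t ^ 3 * (2 / 9) := by
  have h := Real.exp_bound (x := -t) (by rw [abs_neg, abs_of_nonneg ht0]; exact ht1)
    (n := 3) (by norm_num)
  have hs : (∑ m ∈ Finset.range 3, (-t) ^ m / (m.factorial : ℝ)) = taylorExp 2 (-t) := by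
    simp [taylorExp]
  rw [hs, abs_sub_comm] at h
  have : |(-t)| ^ 3 * ((3 : ℕ).succ / ((3 : ℕ).factorial * 3) : ℝ) = t ^ 3 * (2 / 9) := by
    rw [abs_neg, abs_of_nonneg ht0]; norm_num [Nat.factorial]
  linarith [this ▸ h]

set_option maxHeartbeats 1600000 in
/-- Equation (eq:topr1) for `p = 2`, `q = 4`: for `v ≥ 2`, `h ≥ 2`,
`1 ≤ i ≤ h`, reals `0 ≤ c, d ≤ v` and `0 ≤ x ≤ d`, the product
`g_i(c+x)·g_{i+1}(d−x)` is within `1/v⁶` of its exponential surrogate. -/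
theorem roundPoly_product_exp_approx (v h : ℕ) (hv : 2 ≤ v) (hh : 2 ≤ h)
    (i : ℕ) (hi1 : 1 ≤ i) (hih : i ≤ h)
    (c d : ℝ) (hc0 : 0 ≤ c) (hcv : c ≤ (v : ℝ)) (hd0 : 0 ≤ d) (hdv : d ≤ (v : ℝ))
    (x : ℝ) (hx0 : 0 ≤ x) (hxd : x ≤ d) :
    |roundPoly v h 2 4 i (c + x) * roundPoly v h 2 4 (i + 1) (d - x) -
        Real.exp (-((c + x) / ((v : ℝ) ^ 3 * (3 - (i : ℝ) / (h : ℝ))))) *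
          Real.exp (-((d - x) / ((v : ℝ) ^ 3 * (3 - ((i : ℝ) + 1) / (h : ℝ)))))|
      ≤ 1 / (v : ℝ) ^ 6 := by
  have hv2 : (2:ℝ) ≤ v := by exact_mod_cast hv
  have hh2 : (2:ℝ) ≤ h := by exact_mod_cast hh
  have hvpos : (0:ℝ) < v := by linarith
  have hhpos : (0:ℝ) < h := by linarith
  have hir : (i:ℝ) ≤ h := by exact_mod_cast hih
  have hi0 : (0:ℝ) ≤ i := Nat.cast_nonneg i
  have h3i : (2:ℝ) ≤ 3 - (i:ℝ)/h := by
    have h1 : (i:ℝ)/h ≤ 1 := (div_le_one hhpos).mpr hir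
    linarith
  have h3i1 : (3:ℝ)/2 ≤ 3 - ((i:ℝ)+1)/h := by
    have h1 : ((i:ℝ)+1)/h ≤ 3/2 := by
      rw [div_le_iff₀ hhpos]; nlinarith
    linarith
  have hv3 : (0:ℝ) < (v:ℝ)^3 := by positivity
  set D1 : ℝ := (v:ℝ)^3 * (3 - (i:ℝ)/h) with hD1
  set D2 : ℝ := (v:ℝ)^3 * (3 - ((i:ℝ)+1)/h) with hD2
  have hD1ge : 2*(v:ℝ)^3 ≤ D1 := by rw [hD1]; nlinarith
  have hD2ge : (3/2)*(v:ℝ)^3 ≤ D2 := by rw [hD2]; nlinarith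
  have hD1pos : 0 < D1 := by nlinarith
  have hD2pos : 0 < D2 := by nlinarith
  set t : ℝ := (c+x)/D1 with htdef
  set s : ℝ := (d-x)/D2 with hsdef
  have ht0 : 0 ≤ t := div_nonneg (by linarith) hD1pos.le
  have hs0 : 0 ≤ s := div_nonneg (by linarith) hD2pos.le
  have hvsq : (0:ℝ) < (v:ℝ)^2 := by positivity
  have ht1 : t ≤ 1/(v:ℝ)^2 := by
    rw [htdef, div_le_div_iff₀ hD1pos hvsq]
    have h1 := mul_le_mul_of_nonneg_right (show c + x ≤ 2*(v:ℝ) by linarith) hvsq.le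
    linarith [hD1ge]
  have hs1 : s ≤ 1/(v:ℝ)^2 := by
    rw [hsdef, div_le_div_iff₀ hD2pos hvsq]
    have h1 := mul_le_mul_of_nonneg_right (show d - x ≤ (v:ℝ) by linarith) hvsq.le
    linarith [hD2ge, hv3]
  have hinv : 1/(v:ℝ)^2 ≤ 1 := by
    rw [div_le_one hvsq]; nlinarith
  have htle1 : t ≤ 1 := le_trans ht1 hinv
  have hsle1 : s ≤ 1 := le_trans hs1 hinv
  -- rewrite roundPoly and exp args
  have hrp1 : roundPoly v h 2 4 i (c + x) = taylorExp 2 (-t) := by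
    rw [roundPoly, htdef, hD1]
  have hrp2 : roundPoly v h 2 4 (i + 1) (d - x) = taylorExp 2 (-s) := by
    rw [roundPoly, hsdef, hD2]; push_cast; try rfl
  have hex1 : Real.exp (-((c + x) / ((v : ℝ) ^ 3 * (3 - (i : ℝ) / (h : ℝ))))) =
      Real.exp (-t) := by rw [htdef, hD1]
  have hex2 : Real.exp (-((d - x) / ((v : ℝ) ^ 3 * (3 - ((i : ℝ) + 1) / (h : ℝ))))) =
      Real.exp (-s) := by rw [hsdef, hD2]
  rw [hrp1, hrp2, hex1, hex2]
  set A : ℝ := taylorExp 2 (-t)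
  set B : ℝ := taylorExp 2 (-s)
  set a : ℝ := Real.exp (-t)
  set b : ℝ := Real.exp (-s)
  have herrA : |A - a| ≤ t ^ 3 * (2/9) := exp_taylor2_err ht0 htle1
  have herrB : |B - b| ≤ s ^ 3 * (2/9) := exp_taylor2_err hs0 hsle1
  have hAval : A = 1 + (-t) + (-t)^2/2 := taylorExp_two (-t)
  have hAabs : |A| ≤ 1 := by
    rw [abs_le]; constructor <;> nlinarith
  have hbabs : |b| ≤ 1 := by
    rw [abs_of_pos (Real.exp_pos _)]
    exact Real.exp_le_one_iff.mpr (by linarith)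
  have key : A * B - a * b = A * (B - b) + (A - a) * b := by ring
  have hcube_t : t ^ 3 ≤ (1/(v:ℝ)^2) ^ 3 := pow_le_pow_left₀ ht0 ht1 3
  have hcube_s : s ^ 3 ≤ (1/(v:ℝ)^2) ^ 3 := pow_le_pow_left₀ hs0 hs1 3
  have hpow : (1/(v:ℝ)^2) ^ 3 = 1/(v:ℝ)^6 := by
    field_simp
  calc |A * B - a * b| = |A * (B - b) + (A - a) * b| := by rw [key]
    _ ≤ |A * (B - b)| + |(A - a) * b| := abs_add_le _ _
    _ = |A| * |B - b| + |A - a| * |b| := by rw [abs_mul, abs_mul]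
    _ ≤ 1 * (s ^ 3 * (2/9)) + (t ^ 3 * (2/9)) * 1 := by
        gcongr <;> first | assumption | positivity
    _ ≤ 1 / (v:ℝ)^6 := by
        rw [← hpow]; linarith [pow_nonneg (le_of_lt (show (0:ℝ) < 1/(v:ℝ)^2 by positivity)) 3]
end

section
/- Let ε be a real number with 0 < ε ≤ 1 and b ≥ 1 an integer. Then ∏_{i=1}^{h} g_i((ε/b)·v) ≤ (1 − ε/(6·b·v^{q−2}))^{h} ≤ exp(−h·ε/(6·b·v^{q−2})). In particular, if h = ⌊α·v^{q−1}⌋ for a real α ∈ (0,1) with α·v^{q−1} ≥ 2, this product is at most exp(−α·ε·v/(12·b)). -/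
lemma geo_sum_le (p : ℕ) (hp : 2 ≤ p) :
    ∑ j ∈ Finset.Ico 2 (p + 1), (1/2 : ℝ) ^ (j - 1) = 1 - (1/2 : ℝ) ^ (p - 1) := by
  induction p, hp using Nat.le_induction with
  | base => norm_num [Finset.sum_Ico_succ_top]
  | succ n hn ih =>
      rw [Finset.sum_Ico_succ_top (by omega), ih]
      have h1 : n + 1 - 1 = (n - 1) + 1 := by omega
      rw [h1, pow_succ]
      ring

lemma taylorExp_near (p : ℕ) (hp : 2 ≤ p) (y : ℝ) (hy0 : 0 ≤ y) (hy : y ≤ 1/2) :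
    |taylorExp p (-y) - (1 - y)| ≤ y ^ 2 := by
  have h1 : taylorExp p (-y) - (1 - y) = ∑ j ∈ Finset.Ico 2 (p+1), (-y)^j / (Nat.factorial j : ℝ) := by
    rw [taylorExp, Finset.range_eq_Ico,
      ← Finset.sum_Ico_consecutive _ (by omega : 0 ≤ 2) (by omega : 2 ≤ p+1)]
    have h2 : Finset.Ico 0 2 = ({0, 1} : Finset ℕ) := by decide
    rw [h2]
    simp [Nat.factorial]
    ring
  rw [h1]
  calc |∑ j ∈ Finset.Ico 2 (p+1), (-y)^j / (Nat.factorial j : ℝ)|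
      ≤ ∑ j ∈ Finset.Ico 2 (p+1), |(-y)^j / (Nat.factorial j : ℝ)| :=
        Finset.abs_sum_le_sum_abs _ _
    _ ≤ ∑ j ∈ Finset.Ico 2 (p+1), y^2 * (1/2 : ℝ)^(j-1) := by
        apply Finset.sum_le_sum
        intro j hj
        obtain ⟨hj2, hjp⟩ := Finset.mem_Ico.mp hj
        have hfac : (2 : ℝ) ≤ (Nat.factorial j : ℝ) := by
          have := Nat.factorial_le hj2
          simp [Nat.factorial] at this
          exact_mod_cast this
        have hfac0 : (0:ℝ) < (Nat.factorial j : ℝ) := by positivity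
        rw [abs_div, abs_pow, abs_neg, abs_of_nonneg hy0, abs_of_nonneg (le_of_lt hfac0)]
        have hyj : y ^ j ≤ y^2 * (1/2)^(j-2) := by
          have : y ^ j = y^2 * y^(j-2) := by
            rw [← pow_add]; congr 1; omega
          rw [this]
          exact mul_le_mul_of_nonneg_left (pow_le_pow_left₀ hy0 hy _) (sq_nonneg y)
        calc y ^ j / (Nat.factorial j : ℝ) ≤ (y^2 * (1/2)^(j-2)) / 2 := by
              apply div_le_div₀ (by positivity) hyj (by norm_num) hfac
          _ = y^2 * (1/2)^(j-1) := by
              have : j - 1 = (j - 2) + 1 := by omega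
              rw [this, pow_succ]; ring
    _ = y^2 * ∑ j ∈ Finset.Ico 2 (p+1), (1/2 : ℝ)^(j-1) := by rw [Finset.mul_sum]
    _ ≤ y^2 * 1 := by
        have := geo_sum_le p hp
        have h3 : (0:ℝ) ≤ (1/2:ℝ)^(p-1) := by positivity
        nlinarith [sq_nonneg y]
    _ = y^2 := by ring

lemma taylorExp_bounds (p : ℕ) (hp : 2 ≤ p) (y : ℝ) (hy0 : 0 ≤ y) (hy : y ≤ 1/2) :
    0 ≤ taylorExp p (-y) ∧ taylorExp p (-y) ≤ 1 - y/2 := by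
  have h := abs_le.mp (taylorExp_near p hp y hy0 hy)
  constructor <;> nlinarith [h.1, h.2]

set_option maxHeartbeats 1000000 in
/-- reward upper bound in Proposition 4.6: for `0 < ε ≤ 1` and `b ≥ 1`,
`∏_{i=1}^{h} g_i((ε/b)·v) ≤ (1 − ε/(6·b·v^{q−2}))^h ≤ exp(−h·ε/(6·b·v^{q−2}))`; in
particular, if `h = ⌊α·v^{q−1}⌋` for `α ∈ (0,1)` with `α·v^{q−1} ≥ 2`, the product is
at most `exp(−α·ε·v/(12·b))`. -/
theorem roundPoly_prod_small (v h p q : ℕ) (hv : 2 ≤ v) (hh : 1 ≤ h) (hp : 2 ≤ p)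
    (hq : 2 ≤ q) (ε : ℝ) (hε0 : 0 < ε) (hε1 : ε ≤ 1) (b : ℕ) (hb : 1 ≤ b) :
    (∏ i ∈ Finset.Icc 1 h, roundPoly v h p q i (ε / (b : ℝ) * (v : ℝ))
        ≤ (1 - ε / (6 * (b : ℝ) * (v : ℝ) ^ (q - 2))) ^ h) ∧
    ((1 - ε / (6 * (b : ℝ) * (v : ℝ) ^ (q - 2))) ^ h
        ≤ Real.exp (-((h : ℝ) * ε / (6 * (b : ℝ) * (v : ℝ) ^ (q - 2))))) ∧
    (∀ α : ℝ, 0 < α → α < 1 → 2 ≤ α * (v : ℝ) ^ (q - 1) → h = ⌊α * (v : ℝ) ^ (q - 1)⌋₊ →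
        ∏ i ∈ Finset.Icc 1 h, roundPoly v h p q i (ε / (b : ℝ) * (v : ℝ))
          ≤ Real.exp (-(α * ε * (v : ℝ) / (12 * (b : ℝ))))) := by
  have hv0 : (2:ℝ) ≤ (v:ℝ) := by exact_mod_cast hv
  have hb0 : (1:ℝ) ≤ (b:ℝ) := by exact_mod_cast hb
  have hh0 : (1:ℝ) ≤ (h:ℝ) := by exact_mod_cast hh
  have hV1 : (1:ℝ) ≤ (v:ℝ) ^ (q-2) := one_le_pow₀ (by linarith)
  have hV0 : (0:ℝ) < (v:ℝ) ^ (q-2) := by linarith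
  set V : ℝ := (v:ℝ) ^ (q-2) with hV
  set t : ℝ := ε / (6 * (b:ℝ) * V) with htdef
  have hvq : (v:ℝ) ^ (q-1) = V * v := by
    rw [hV, ← pow_succ]; congr 1; omega
  have ht0 : 0 < t := by rw [htdef]; positivity
  have ht6 : t ≤ 1/6 := by
    rw [htdef, div_le_iff₀ (by positivity)]
    nlinarith
  set x : ℝ := ε / (b:ℝ) * (v:ℝ) with hxdef
  clear_value V t x
  have hx0 : 0 < x := by rw [hxdef]; positivity
  have hxv : x ≤ (v:ℝ) := by
    rw [hxdef]
    have h1 : ε / (b:ℝ) ≤ 1 := by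
      rw [div_le_one (by linarith)]; linarith
    nlinarith
  have key : ∀ i ∈ Finset.Icc 1 h,
      0 ≤ roundPoly v h p q i x ∧ roundPoly v h p q i x ≤ 1 - t := by
    intro i hi
    obtain ⟨hi1, hih⟩ := Finset.mem_Icc.mp hi
    have hfr0 : 0 ≤ (i:ℝ)/(h:ℝ) := by positivity
    have hfr1 : (i:ℝ)/(h:ℝ) ≤ 1 := by
      rw [div_le_one (by linarith)]; exact_mod_cast hih
    set c : ℝ := 3 - (i:ℝ)/(h:ℝ) with hcdef
    have hc2 : 2 ≤ c := by rw [hcdef]; linarith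
    have hc3 : c ≤ 3 := by rw [hcdef]; linarith
    set D : ℝ := (v:ℝ) ^ (q-1) * c with hDdef
    have hD0 : 0 < D := by
      rw [hDdef, hvq]; positivity
    set y : ℝ := x / D with hydef
    clear_value c D y
    have hy0 : 0 ≤ y := hydef ▸ div_nonneg hx0.le hD0.le
    have hyle : y ≤ 1/2 := by
      rw [hydef, div_le_iff₀ hD0, hDdef, hvq]
      have hVc : (2:ℝ) ≤ V * c := by nlinarith [mul_le_mul hV1 hc2 (by norm_num : (0:ℝ) ≤ 2) (by linarith : (0:ℝ) ≤ V)]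
      have h2vc : (2:ℝ) * (v:ℝ) ≤ V * (v:ℝ) * c := by
        nlinarith [mul_le_mul_of_nonneg_right hVc (show (0:ℝ) ≤ (v:ℝ) by linarith)]
      linarith
    have h2t : 2 * t ≤ y := by
      rw [hydef, le_div_iff₀ hD0, hDdef, hvq, htdef, hxdef]
      have hb0' : (0:ℝ) < (b:ℝ) := by linarith
      rw [show 2 * (ε / (6 * (b:ℝ) * V)) * (V * (v:ℝ) * c) = (2 * ε * (V * (v:ℝ) * c)) / (6 * (b:ℝ) * V) from by ring,
        show ε / (b:ℝ) * (v:ℝ) = (ε * (v:ℝ)) / (b:ℝ) from by ring,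
        div_le_div_iff₀ (mul_pos (by linarith : (0:ℝ) < 6 * (b:ℝ)) hV0) hb0']
      have hpos : (0:ℝ) ≤ 2 * ε * V * (v:ℝ) * (b:ℝ) :=
        le_of_lt (mul_pos (mul_pos (mul_pos (mul_pos (by norm_num : (0:ℝ) < 2) hε0) hV0)
          (by linarith : (0:ℝ) < (v:ℝ))) (by linarith : (0:ℝ) < (b:ℝ)))
      nlinarith [mul_le_mul_of_nonneg_left hc3 hpos]
    have hbnd := taylorExp_bounds p hp y hy0 hyle
    have hr : roundPoly v h p q i x = taylorExp p (-y) := by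
      unfold roundPoly
      rw [hydef, hDdef, hcdef]
    rw [hr]
    exact ⟨hbnd.1, by linarith [hbnd.2]⟩
  have h1 : ∏ i ∈ Finset.Icc 1 h, roundPoly v h p q i x ≤ (1 - t) ^ h := by
    calc ∏ i ∈ Finset.Icc 1 h, roundPoly v h p q i x
        ≤ ∏ _i ∈ Finset.Icc 1 h, (1 - t) :=
          Finset.prod_le_prod (fun i hi => (key i hi).1) (fun i hi => (key i hi).2)
      _ = (1 - t) ^ h := by rw [Finset.prod_const, Nat.card_Icc]; norm_num
  have h2 : (1 - t) ^ h ≤ Real.exp (-((h:ℝ) * t)) := by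
    have he : 1 - t ≤ Real.exp (-t) := by nlinarith [Real.add_one_le_exp (-t)]
    calc (1 - t) ^ h ≤ (Real.exp (-t)) ^ h := pow_le_pow_left₀ (by linarith) he h
      _ = Real.exp (-((h:ℝ) * t)) := by
          rw [← Real.exp_nat_mul]; congr 1; ring
  have hteq : (h:ℝ) * ε / (6 * (b:ℝ) * V) = (h:ℝ) * t := by
    rw [htdef]; ring
  refine ⟨h1, by rw [hteq]; exact h2, ?_⟩
  intro α hα0 hα1 hα2 hαh
  have hfl : α * (v:ℝ) ^ (q-1) - 1 ≤ (h:ℝ) := by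
    have := Nat.lt_floor_add_one (α * (v:ℝ) ^ (q-1))
    rw [hαh]; linarith
  have hhalf : α * (v:ℝ) ^ (q-1) / 2 ≤ (h:ℝ) := by linarith
  have hfin : α * ε * (v:ℝ) / (12 * (b:ℝ)) ≤ (h:ℝ) * t := by
    have hle : α * (v:ℝ) ^ (q-1) / 2 * t ≤ (h:ℝ) * t :=
      mul_le_mul_of_nonneg_right hhalf (le_of_lt ht0)
    have heq : α * (v:ℝ) ^ (q-1) / 2 * t = α * ε * (v:ℝ) / (12 * (b:ℝ)) := by
      rw [htdef, hvq]
      field_simp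
      ring
    linarith [heq ▸ hle]
  calc ∏ i ∈ Finset.Icc 1 h, roundPoly v h p q i x
      ≤ (1 - t) ^ h := h1
    _ ≤ Real.exp (-((h:ℝ) * t)) := h2
    _ ≤ Real.exp (-(α * ε * (v:ℝ) / (12 * (b:ℝ)))) := Real.exp_le_exp.mpr (by linarith)
end

section
/- There exist a real α₀ ∈ (0,1) and an integer v₀ such that for every real α ∈ (0, α₀] and every integer v ≥ v₀, setting p = 2, q = 4 and h = ⌊α·v³⌋, the following holds: for all integers n ≥ 1 and l ≥ 0 with n + l + 1 ≤ h + 1, and all vectors w^{(n)}, w^{(n+1)}, …, w^{(n+l+1)}, w* ∈ {−1,1}^v, one has ∏_{i=n}^{n+l} g_i(dist(w^{(i)}, w^{(i+1)})) · g_{n+l+1}(dist(w^{(n+l+1)}, w*)) ≤ g_n(dist(w^{(n)}, w^{(n+1)})) · g_{n+1}(dist(w^{(n+1)}, w*)), where dist denotes Hamming distance on {−1,1}^v. -/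
noncomputable def fc (t : ℝ) : ℝ := 1 - t + t ^ 2 / 2

lemma fc_nonneg (t : ℝ) : 0 ≤ fc t := by unfold fc; nlinarith [sq_nonneg (t - 1)]
lemma fc_ge (t : ℝ) : 1 - t ≤ fc t := by unfold fc; nlinarith [sq_nonneg t]
lemma fc_le_one {t : ℝ} (h0 : 0 ≤ t) (h2 : t ≤ 2) : fc t ≤ 1 := by unfold fc; nlinarith
lemma fc_anti {a b : ℝ} (h0 : 0 ≤ a) (hab : a ≤ b) (hb : b ≤ 1) : fc b ≤ fc a := by
  unfold fc; nlinarith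
lemma fc_mul_le {a b : ℝ} (ha : 0 ≤ a) (hb : 0 ≤ b) (hab : a + b ≤ 2) :
    fc a * fc b ≤ fc (a + b) := by
  unfold fc
  nlinarith [mul_nonneg (mul_nonneg ha hb) hb,
    mul_nonneg (mul_nonneg (mul_nonneg ha ha) hb) (by linarith : (0:ℝ) ≤ 2 - b)]
lemma fc_le_exp {z : ℝ} (h0 : 0 ≤ z) (h2 : z ≤ 1/2) :
    fc z ≤ Real.exp (-(3/4 * z)) := by
  have h := Real.add_one_le_exp (-(3/4 * z))
  unfold fc
  nlinarith [mul_nonneg h0 (by linarith : (0:ℝ) ≤ 1/2 - z)]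
lemma prod_fc_le (s : Finset ℕ) (z : ℕ → ℝ) :
    (∀ i ∈ s, 0 ≤ z i) → (∑ i ∈ s, z i ≤ 1) →
    ∏ i ∈ s, fc (z i) ≤ fc (∑ i ∈ s, z i) := by
  classical
  induction s using Finset.induction_on with
  | empty => intro _ _; simp [fc]
  | @insert a s ha ih =>
    intro h0 h1
    rw [Finset.prod_insert ha, Finset.sum_insert ha]
    rw [Finset.sum_insert ha] at h1
    have hz : 0 ≤ z a := h0 a (Finset.mem_insert_self a s)
    have h0' : ∀ i ∈ s, 0 ≤ z i := fun i hi => h0 i (Finset.mem_insert_of_mem hi)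
    have hsum0 : 0 ≤ ∑ i ∈ s, z i := Finset.sum_nonneg h0'
    calc fc (z a) * ∏ i ∈ s, fc (z i) ≤ fc (z a) * fc (∑ i ∈ s, z i) :=
          mul_le_mul_of_nonneg_left (ih h0' (by linarith)) (fc_nonneg _)
      _ ≤ fc (z a + ∑ i ∈ s, z i) := fc_mul_le hz hsum0 (by linarith)
lemma path_tri {v : ℕ} (w : ℕ → Fin v → ℤ) (a l : ℕ) :
    hammingDist (w a) (w (a + l)) ≤ ∑ i ∈ Finset.Ico a (a + l), hammingDist (w i) (w (i + 1)) := by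
  induction l with
  | zero => simp
  | succ l ih =>
    rw [show a + (l + 1) = (a + l) + 1 from rfl, Finset.sum_Ico_succ_top (Nat.le_add_right a l)]
    exact le_trans (hammingDist_triangle _ (w (a + l)) _) (Nat.add_le_add_right ih _)

lemma roundPoly_eq (v h i : ℕ) (x : ℝ) :
    roundPoly v h 2 4 i x = fc (x / ((v:ℝ)^3 * (3 - (i:ℝ)/(h:ℝ)))) := by
  simp [roundPoly, taylorExp, fc, Finset.sum_range_succ, Nat.factorial]
  ring

lemma hexp34 : Real.exp (-(3/4)) ≤ 3/4 := by
  rw [Real.exp_neg]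
  have h1 : (7/4:ℝ) ≤ Real.exp (3/4) := by
    have := Real.add_one_le_exp (3/4:ℝ); linarith
  have h2 : (Real.exp (3/4))⁻¹ ≤ ((7:ℝ)/4)⁻¹ := inv_anti₀ (by norm_num) h1
  have : ((7:ℝ)/4)⁻¹ ≤ 3/4 := by norm_num
  linarith

/-- Equation (eq:path-compression), regime `p = 2`, `q = 4`,
`h = ⌊α·v³⌋`: there exist `α₀ ∈ (0,1)` and `v₀` such that for all `α ∈ (0, α₀]` and
`v ≥ v₀`, for all `n ≥ 1`, `l ≥ 0` with `n + l + 1 ≤ h + 1`, and all vectors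
`w⁽ⁿ⁾, …, w⁽ⁿ⁺ˡ⁺¹⁾, w* ∈ {−1,1}^v`,
`∏_{i=n}^{n+l} g_i(dist(w⁽ⁱ⁾, w⁽ⁱ⁺¹⁾)) · g_{n+l+1}(dist(w⁽ⁿ⁺ˡ⁺¹⁾, w*))
  ≤ g_n(dist(w⁽ⁿ⁾, w⁽ⁿ⁺¹⁾)) · g_{n+1}(dist(w⁽ⁿ⁺¹⁾, w*))`,
where `dist` is the Hamming distance. -/
theorem path_compression :
    ∃ α₀ : ℝ, α₀ ∈ Set.Ioo (0 : ℝ) 1 ∧ ∃ v₀ : ℕ,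
      ∀ α : ℝ, 0 < α → α ≤ α₀ → ∀ v : ℕ, v₀ ≤ v →
        ∀ h : ℕ, h = ⌊α * (v : ℝ) ^ 3⌋₊ →
          ∀ n l : ℕ, 1 ≤ n → n + l + 1 ≤ h + 1 →
            ∀ w : ℕ → (Fin v → ℤ), (∀ k j, w k j = -1 ∨ w k j = 1) →
              ∀ wstar : Fin v → ℤ, (∀ j, wstar j = -1 ∨ wstar j = 1) →
                (∏ i ∈ Finset.Icc n (n + l),
                      roundPoly v h 2 4 i (hammingDist (w i) (w (i + 1)) : ℝ)) *
                    roundPoly v h 2 4 (n + l + 1) (hammingDist (w (n + l + 1)) wstar : ℝ)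
                  ≤ roundPoly v h 2 4 n (hammingDist (w n) (w (n + 1)) : ℝ) *
                    roundPoly v h 2 4 (n + 1) (hammingDist (w (n + 1)) wstar : ℝ) := by
  refine ⟨1/2, ⟨by norm_num, by norm_num⟩, 2, ?_⟩
  intro α hα0 hα1 v hv h hh n l hn hnl w hw wstar hwstar
  clear hh hα0 hα1 hw hwstar
  have hh1 : 1 ≤ h := by omega
  have hvR : (2:ℝ) ≤ (v:ℝ) := by exact_mod_cast hv
  have hhR : (1:ℝ) ≤ (h:ℝ) := by exact_mod_cast hh1
  set C : ℕ → ℝ := fun i => (v:ℝ)^3 * (3 - (i:ℝ)/(h:ℝ)) with hC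
  have hCge : ∀ i : ℕ, i ≤ h + 1 → (v:ℝ)^3 ≤ C i := by
    intro i hi
    have h1 : (i:ℝ) ≤ (h:ℝ) + 1 := by exact_mod_cast hi
    have h3 : (i:ℝ)/(h:ℝ) ≤ 2 := by
      rw [div_le_iff₀ (by linarith)]; linarith
    have h4 : (1:ℝ) ≤ 3 - (i:ℝ)/(h:ℝ) := by linarith
    calc (v:ℝ)^3 = (v:ℝ)^3 * 1 := by ring
      _ ≤ C i := by
          simp only [hC]
          exact mul_le_mul_of_nonneg_left h4 (by positivity)
  have hCpos : ∀ i : ℕ, i ≤ h + 1 → 0 < C i := fun i hi =>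
    lt_of_lt_of_le (by positivity) (hCge i hi)
  have hCmono : ∀ i j : ℕ, i ≤ j → C j ≤ C i := by
    intro i j hij
    have h1 : (i:ℝ) ≤ (j:ℝ) := by exact_mod_cast hij
    have h2 : (i:ℝ)/(h:ℝ) ≤ (j:ℝ)/(h:ℝ) := by
      apply div_le_div_of_nonneg_right h1 (by linarith)
    simp only [hC]
    have hv0 : (0:ℝ) ≤ (v:ℝ)^3 := by positivity
    nlinarith
  -- distances
  set d : ℕ → ℝ := fun i => (hammingDist (w i) (w (i + 1)) : ℝ) with hd
  set dstar : ℝ := (hammingDist (w (n + l + 1)) wstar : ℝ) with hdstar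
  set D : ℝ := (hammingDist (w (n + 1)) wstar : ℝ) with hD
  have hd0 : ∀ i, 0 ≤ d i := fun i => Nat.cast_nonneg _
  have hdstar0 : 0 ≤ dstar := Nat.cast_nonneg _
  have hD0 : 0 ≤ D := Nat.cast_nonneg _
  have hdist_le : ∀ x y : Fin v → ℤ, ((hammingDist x y : ℕ) : ℝ) ≤ (v:ℝ) := by
    intro x y
    have := hammingDist_le_card_fintype (x := x) (y := y)
    have h2 : hammingDist x y ≤ v := by simpa using this
    exact_mod_cast h2
  have hd_le : ∀ i, d i ≤ (v:ℝ) := fun i => hdist_le _ _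
  have hdstar_le : dstar ≤ (v:ℝ) := hdist_le _ _
  have hD_le : D ≤ (v:ℝ) := hdist_le _ _
  have hv_le_v3 : (4:ℝ) * (v:ℝ) ≤ (v:ℝ)^3 := by
    have h4 : (4:ℝ) ≤ (v:ℝ)^2 := by nlinarith
    nlinarith
  -- the quarter bound : x ≤ v, v^3 ≤ c  →  x / c ≤ 1/4
  have hquarter : ∀ x c : ℝ, 0 ≤ x → x ≤ (v:ℝ) → (v:ℝ)^3 ≤ c → x / c ≤ 1/4 := by
    intro x c hx hxv hc
    have hcpos : 0 < c := lt_of_lt_of_le (by positivity) hc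
    rw [div_le_iff₀ hcpos]
    nlinarith
  -- rewrite goal
  simp only [roundPoly_eq]
  rw [show Finset.Icc n (n + l) = insert n (Finset.Icc (n + 1) (n + l)) by
    ext x; simp only [Finset.mem_Icc, Finset.mem_insert]; omega]
  rw [Finset.prod_insert (by simp)]
  rw [mul_assoc]
  apply mul_le_mul_of_nonneg_left _ (fc_nonneg _)
  -- now : (∏ i ∈ Icc (n+1) (n+l), fc (d i / C i)) * fc (dstar / C (n+l+1)) ≤ fc (D / C (n+1))
  set s := Finset.Icc (n + 1) (n + l) with hs
  have hmem : ∀ i ∈ s, n + 1 ≤ i ∧ i ≤ h := by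
    intro i hi; rw [hs, Finset.mem_Icc] at hi; omega
  have hCn1 : (v:ℝ)^3 ≤ C (n+1) := hCge (n+1) (by omega)
  have hCn1pos : 0 < C (n+1) := hCpos (n+1) (by omega)
  have hstep1 : ∀ i ∈ s, fc (d i / C i) ≤ fc (d i / C (n+1)) := by
    intro i hi
    obtain ⟨hi1, hi2⟩ := hmem i hi
    have hCi : (v:ℝ)^3 ≤ C i := hCge i (by omega)
    have hCipos : 0 < C i := hCpos i (by omega)
    apply fc_anti (by positivity)
    · exact div_le_div_of_nonneg_left (hd0 i) hCipos (hCmono (n+1) i hi1)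
    · linarith [hquarter (d i) (C i) (hd0 i) (hd_le i) hCi]
  have hstepstar : fc (dstar / C (n+l+1)) ≤ fc (dstar / C (n+1)) := by
    have hCi : (v:ℝ)^3 ≤ C (n+l+1) := hCge _ (by omega)
    have hCipos : 0 < C (n+l+1) := hCpos _ (by omega)
    apply fc_anti (by positivity)
    · exact div_le_div_of_nonneg_left hdstar0 hCipos (hCmono (n+1) (n+l+1) (by omega))
    · linarith [hquarter dstar (C (n+l+1)) hdstar0 hdstar_le hCi]
  have step1 : (∏ i ∈ s, fc (d i / C i)) * fc (dstar / C (n+l+1))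
      ≤ (∏ i ∈ s, fc (d i / C (n+1))) * fc (dstar / C (n+1)) := by
    apply mul_le_mul
    · exact Finset.prod_le_prod (fun i _ => fc_nonneg _) hstep1
    · exact hstepstar
    · exact fc_nonneg _
    · exact Finset.prod_nonneg (fun i _ => fc_nonneg _)
  refine le_trans step1 ?_
  -- triangle inequality
  have tri : D ≤ (∑ i ∈ s, d i) + dstar := by
    have t1 : hammingDist (w (n+1)) (w (n+l+1))
        ≤ ∑ i ∈ Finset.Ico (n+1) (n+l+1), hammingDist (w i) (w (i+1)) := by
      have := path_tri w (n+1) l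
      rwa [show n+1+l = n+l+1 by omega] at this
    have t2 : hammingDist (w (n+1)) wstar
        ≤ hammingDist (w (n+1)) (w (n+l+1)) + hammingDist (w (n+l+1)) wstar :=
      hammingDist_triangle _ _ _
    have t3 : hammingDist (w (n+1)) wstar
        ≤ (∑ i ∈ Finset.Ico (n+1) (n+l+1), hammingDist (w i) (w (i+1)))
          + hammingDist (w (n+l+1)) wstar := le_trans t2 (Nat.add_le_add_right t1 _)
    have t4 : Finset.Ico (n+1) (n+l+1) = s := by rw [hs, Finset.Ico_add_one_right_eq_Icc]
    rw [t4] at t3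
    have t5 : ((hammingDist (w (n+1)) wstar : ℕ) : ℝ)
        ≤ (((∑ i ∈ s, hammingDist (w i) (w (i+1))) + hammingDist (w (n+l+1)) wstar : ℕ) : ℝ) := by
      exact_mod_cast t3
    push_cast at t5
    simpa [hD, hd, hdstar] using t5
  -- set up the z's
  set Z : ℝ := ∑ i ∈ s, d i / C (n+1) with hZ
  have hZ0 : 0 ≤ Z := Finset.sum_nonneg (fun i _ => by positivity)
  have hzstar0 : 0 ≤ dstar / C (n+1) := by positivity
  have hY0 : 0 ≤ D / C (n+1) := by positivity
  have hYq : D / C (n+1) ≤ 1/4 := hquarter D _ hD0 hD_le hCn1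
  have hzstarq : dstar / C (n+1) ≤ 1/4 := hquarter dstar _ hdstar0 hdstar_le hCn1
  have hYle : D / C (n+1) ≤ Z + dstar / C (n+1) := by
    rw [hZ, ← Finset.sum_div, ← add_div]
    exact div_le_div_of_nonneg_right tri hCn1pos.le
  by_cases hS : Z + dstar / C (n+1) ≤ 1
  · -- small-sum case
    have hp : ∏ i ∈ s, fc (d i / C (n+1)) ≤ fc Z :=
      prod_fc_le s _ (fun i _ => by positivity) (by linarith)
    calc (∏ i ∈ s, fc (d i / C (n+1))) * fc (dstar / C (n+1))
        ≤ fc Z * fc (dstar / C (n+1)) :=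
          mul_le_mul_of_nonneg_right hp (fc_nonneg _)
      _ ≤ fc (Z + dstar / C (n+1)) := fc_mul_le hZ0 hzstar0 (by linarith)
      _ ≤ fc (D / C (n+1)) := fc_anti hY0 hYle hS
  · -- large-sum case
    push_neg at hS
    have hexp1 : ∏ i ∈ s, fc (d i / C (n+1)) ≤ Real.exp (-(3/4 * Z)) := by
      calc ∏ i ∈ s, fc (d i / C (n+1))
          ≤ ∏ i ∈ s, Real.exp (-(3/4 * (d i / C (n+1)))) := by
            apply Finset.prod_le_prod (fun i _ => fc_nonneg _)
            intro i hi
            exact fc_le_exp (by positivity)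
              (by linarith [hquarter (d i) (C (n+1)) (hd0 i) (hd_le i) hCn1])
        _ = Real.exp (∑ i ∈ s, -(3/4 * (d i / C (n+1)))) := (Real.exp_sum _ _).symm
        _ = Real.exp (-(3/4 * Z)) := by
            rw [hZ, Finset.mul_sum, ← Finset.sum_neg_distrib]
    have hexp2 : fc (dstar / C (n+1)) ≤ Real.exp (-(3/4 * (dstar / C (n+1)))) :=
      fc_le_exp hzstar0 (by linarith)
    calc (∏ i ∈ s, fc (d i / C (n+1))) * fc (dstar / C (n+1))
        ≤ Real.exp (-(3/4 * Z)) * Real.exp (-(3/4 * (dstar / C (n+1)))) :=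
          mul_le_mul hexp1 hexp2 (fc_nonneg _) (Real.exp_nonneg _)
      _ = Real.exp (-(3/4 * (Z + dstar / C (n+1)))) := by
          rw [← Real.exp_add]; congr 1; ring
      _ ≤ Real.exp (-(3/4)) := by
          apply Real.exp_le_exp.mpr; linarith
      _ ≤ 3/4 := hexp34
      _ ≤ fc (D / C (n+1)) := by
          have := fc_ge (D / C (n+1)); linarith
end
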